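/- Let 𝓡 be a reaction network on d species containing the reactions y*_1 → y*_2, y*_2 → y*_3, …, y*_{M−1} → y*_M, y*_M → y*_1. Suppose there exist u ∈ ℤ^d_{≥0} and m_0 ∈ {1,…,M} such that (1) I := {i : (u)_i ≠ 0} is a nonempty proper subset of {1,…,d}, and (2) for each m ∈ {1,…,M} and each complex y that is the source of some reaction in 𝓡 \ {y*_m → y*_{m+1}} and satisfies (y)_i ≤ (y*_m)_i for all i ∉ I, one has ⟨u, y⟩ < ⟨u, y*_m − y*_{m_0}⟩, where ⟨·,·⟩ is the standard inner product and y*_{M+1} = y*_1. Define {x_n}_{n≥1} by (x_n)_i = n^{(u)_i} + (y*_1)_i for i ∈ I and (x_n)_i = (y*_1)_i for i ∉ I. Then {x_n} is a tier sequence of 𝓡 and R = (y*_1 → y*_2, …, y*_M → y*_1) is a strong tier-1 cycle along {x_n}. -/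

import Mathlib

open Filter Finset

/-- A reaction network on `d` species: every reaction has a nonnegative source complex and
a nonnegative product complex, and the source differs from the product. -/
def IsRN (d : ℕ) (Rn : Finset ((Fin d → ℤ) × (Fin d → ℤ))) : Prop :=
  ∀ r ∈ Rn, (∀ i, 0 ≤ r.1 i) ∧ (∀ i, 0 ≤ r.2 i) ∧ r.1 ≠ r.2

/-- Mass-action intensity `λ_y(x) = ∏ i, x_i!/(x_i - y_i)!` if `x ≥ y` componentwise, else `0`. -/
def intensity (d : ℕ) (y x : Fin d → ℤ) : ℕ :=
  if ∀ i, y i ≤ x i then ∏ i : Fin d, Nat.descFactorial (x i).toNat ((y i).toNat) else 0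

/-- Cyclic successor on `{1, …, M}`: `cyc M m = m + 1` for `m < M` and `cyc M M = 1`. -/
def cyc (M m : ℕ) : ℕ := if m = M then 1 else m + 1

/-- `xshift d ystar x m n = x^m_n = x_n + ∑_{j=1}^{m-1} (y*_{j+1} - y*_j)`. -/
def xshift (d : ℕ) (ystar : ℕ → Fin d → ℤ) (x : ℕ → Fin d → ℤ) (m n : ℕ) : Fin d → ℤ :=
  fun i => x n i + ∑ j ∈ Finset.Ico 1 m, (ystar (j + 1) i - ystar j i)

/-- The ordered list `(y*_1 → y*_2, …, y*_M → y*_1)` consists of reactions of the network. -/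
def IsCycleIn (d : ℕ) (Rn : Finset ((Fin d → ℤ) × (Fin d → ℤ))) (M : ℕ)
    (ystar : ℕ → Fin d → ℤ) : Prop :=
  ∀ m, 1 ≤ m → m ≤ M → (ystar m, ystar (cyc M m)) ∈ Rn

/-- Condition (ii) of a strong tier-1 cycle, with explicit witness `m0`. -/
def TierLimits (d : ℕ) (Rn : Finset ((Fin d → ℤ) × (Fin d → ℤ))) (M : ℕ)
    (ystar : ℕ → Fin d → ℤ) (x : ℕ → Fin d → ℤ) (m0 : ℕ) : Prop :=
  ∀ m, 1 ≤ m → m ≤ M → ∀ y y' : Fin d → ℤ, (y, y') ∈ Rn →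
    (y, y') ≠ (ystar m, ystar (cyc M m)) →
    Tendsto (fun n =>
        ((intensity d (ystar m0) (xshift d ystar x m0 n) : ℝ) *
          (intensity d y (xshift d ystar x m n) : ℝ)) /
          (intensity d (ystar m) (xshift d ystar x m n) : ℝ))
      atTop (nhds 0)

/-- `R = (y*_1 → y*_2, …, y*_M → y*_1)` is a strong tier-1 cycle along `x`. -/
def IsStrongT1Cycle (d : ℕ) (Rn : Finset ((Fin d → ℤ) × (Fin d → ℤ))) (M : ℕ)
    (ystar : ℕ → Fin d → ℤ) (x : ℕ → Fin d → ℤ) : Prop :=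
  IsCycleIn d Rn M ystar ∧
  (∀ n, 0 < intensity d (ystar 1) (x n)) ∧
  ∃ m0, 1 ≤ m0 ∧ m0 ≤ M ∧ TierLimits d Rn M ystar x m0

/-- `y` is a source complex of the network. -/
def IsSourceIn (d : ℕ) (Rn : Finset ((Fin d → ℤ) × (Fin d → ℤ))) (y : Fin d → ℤ) : Prop :=
  ∃ y', (y, y') ∈ Rn

/-- `y` is a complex (source or product) of the network. -/
def ComplexOf (d : ℕ) (Rn : Finset ((Fin d → ℤ) × (Fin d → ℤ))) (y : Fin d → ℤ) : Prop :=
  ∃ r ∈ Rn, r.1 = y ∨ r.2 = y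

/-- Tier sequence of a reaction network. -/
def IsTierSeq (d : ℕ) (Rn : Finset ((Fin d → ℤ) × (Fin d → ℤ)))
    (x : ℕ → Fin d → ℤ) : Prop :=
  (∀ n i, 0 ≤ x n i) ∧
  (∃ i, Tendsto (fun n => x n i) atTop atTop) ∧
  (∀ i, (Tendsto (fun n => x n i) atTop atTop ∧ Monotone fun n => x n i) ∨
      (∃ c : ℤ, ∀ n, x n i = c)) ∧
  (∀ y y' : Fin d → ℤ, IsSourceIn d Rn y → IsSourceIn d Rn y' →
    (Tendsto (fun n => (intensity d y (x n) : ℝ) / (intensity d y' (x n) : ℝ)) atTop atTop ∨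
      ∃ c : ℝ, Tendsto (fun n => (intensity d y (x n) : ℝ) / (intensity d y' (x n) : ℝ))
        atTop (nhds c)))

/-- One reaction step: some reaction `y → y'` with `y ≤ a` fires, giving `b = a + y' - y`. -/
def ReactStep (d : ℕ) (Rn : Finset ((Fin d → ℤ) × (Fin d → ℤ)))
    (a b : Fin d → ℤ) : Prop :=
  ∃ r ∈ Rn, (∀ i, r.1 i ≤ a i) ∧ b = fun i => a i + (r.2 i - r.1 i)

/-- `w` is reachable from `z` by finitely many reaction steps. -/
def Reachable (d : ℕ) (Rn : Finset ((Fin d → ℤ) × (Fin d → ℤ)))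
    (z w : Fin d → ℤ) : Prop :=
  Relation.ReflTransGen (ReactStep d Rn) z w

/-- Weak reversibility: every reaction lies on a directed cycle of reactions. -/
def WeaklyReversible (d : ℕ) (Rn : Finset ((Fin d → ℤ) × (Fin d → ℤ))) : Prop :=
  ∀ r ∈ Rn, ∃ (K : ℕ) (ys : ℕ → Fin d → ℤ), 2 ≤ K ∧
    ys 1 = r.1 ∧ ys 2 = r.2 ∧
    (∀ j, 1 ≤ j → j < K → (ys j, ys (j + 1)) ∈ Rn) ∧
    (ys K, ys 1) ∈ Rn



section Aux
open Filter Finset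

private lemma aux_frac (k : ℕ) (hk : 1 ≤ k) (a : ℝ) :
    Tendsto (fun n : ℕ => (((n:ℝ)+1)^k + a) / (n:ℝ)^k) atTop (nhds 1) := by
  have h1 : Tendsto (fun n : ℕ => (1 + 1/(n:ℝ))^k) atTop (nhds 1) := by
    have := (tendsto_const_nhds (x := (1:ℝ)) (f := atTop (α := ℕ))).add
      tendsto_one_div_atTop_nhds_zero_nat
    simpa using this.pow k
  have h2 : Tendsto (fun n : ℕ => a / (n:ℝ)^k) atTop (nhds 0) := by
    apply Tendsto.div_atTop tendsto_const_nhds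
    exact (tendsto_pow_atTop (by omega)).comp tendsto_natCast_atTop_atTop
  have h3 := h1.add h2
  rw [show (1:ℝ) + 0 = 1 by ring] at h3
  apply h3.congr'
  filter_upwards [eventually_ge_atTop 1] with n hn
  have hn' : (0:ℝ) < (n:ℝ) := by positivity
  have hpow : ((n:ℝ))^k ≠ 0 := by positivity
  field_simp
  rw [div_pow, div_mul_cancel₀ _ hpow]

private lemma lemA (k j : ℕ) (hk : 1 ≤ k) (c : ℤ) (hc : 0 ≤ c) :
    Tendsto (fun n : ℕ => ((((n:ℤ)+1)^k + c).toNat.descFactorial j : ℝ) / (n:ℝ)^(k*j))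
      atTop (nhds 1) := by
  have hfc : ∀ n : ℕ, ((((n:ℤ)+1)^k + c).toNat : ℝ) = ((n:ℝ)+1)^k + (c:ℝ) := by
    intro n
    have h0 : (0:ℤ) ≤ ((n:ℤ)+1)^k + c := by positivity
    rw [show ((((n:ℤ)+1)^k + c).toNat : ℝ) = (((((n:ℤ)+1)^k + c).toNat : ℤ) : ℝ) by
        push_cast; ring,
      Int.toNat_of_nonneg h0]
    push_cast
    ring
  have hge : ∀ n : ℕ, n + 1 ≤ (((n:ℤ)+1)^k + c).toNat := by
    intro n
    have h1 : ((n:ℤ)+1) ≤ ((n:ℤ)+1)^k := le_self_pow₀ (by omega) (by omega)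
    omega
  have key : ∀ t : ℕ, Tendsto (fun n : ℕ =>
      (((((n:ℤ)+1)^k + c).toNat : ℝ) - t) / (n:ℝ)^k) atTop (nhds 1) := by
    intro t
    apply (aux_frac k hk ((c:ℝ) - t)).congr
    intro n
    rw [hfc n]
    ring_nf
  have hprod : Tendsto (fun n : ℕ =>
      ∏ t ∈ range j, ((((((n:ℤ)+1)^k + c).toNat : ℝ) - t) / (n:ℝ)^k)) atTop (nhds 1) := by
    simpa using tendsto_finset_prod (range j) (fun t _ => key t)
  apply hprod.congr'
  filter_upwards [eventually_ge_atTop j] with n hn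
  set N := (((n:ℤ)+1)^k + c).toNat with hN
  have hjN : j ≤ N := le_trans (by omega) (hge n)
  have hcast : (N.descFactorial j : ℝ) = ∏ t ∈ range j, ((N:ℝ) - t) := by
    rw [Nat.descFactorial_eq_prod_range, Nat.cast_prod]
    refine prod_congr rfl fun i hi => ?_
    have hiN : i ≤ N := le_trans (mem_range.mp hi).le hjN
    rw [Nat.cast_sub hiN]
  rw [eq_comm, hcast, Finset.prod_div_distrib, Finset.prod_const, Finset.card_range, pow_mul]

private lemma descFactorial_pos' {a b : ℕ} (h : b ≤ a) : 0 < a.descFactorial b :=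
  Nat.pos_of_ne_zero fun h0 =>
    absurd (Nat.descFactorial_eq_zero_iff_lt.mp h0) (not_lt.mpr h)

private lemma intensity_pos {d : ℕ} (y x : Fin d → ℤ) (h : ∀ i, y i ≤ x i) :
    0 < intensity d y x := by
  rw [intensity, if_pos h]
  refine Finset.prod_pos fun i _ => descFactorial_pos' (Int.toNat_le_toNat (h i))

private lemma lemC {d : ℕ} (u y v : Fin d → ℤ) (i0 : Fin d)
    (h0 : u i0 = 0) (hlt : v i0 < y i0) (n : ℕ) :
    intensity d y (fun i => if u i ≠ 0 then ((n:ℤ)+1)^(u i).toNat + v i else v i) = 0 := by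
  rw [intensity, if_neg]
  push_neg
  exact ⟨i0, by simp [h0]; omega⟩

private lemma lemB {d : ℕ} (u : Fin d → ℤ) (hu : ∀ i, 0 ≤ u i) (y v : Fin d → ℤ)
    (hy : ∀ i, 0 ≤ y i) (hv : ∀ i, 0 ≤ v i) (hyv : ∀ i, u i = 0 → y i ≤ v i) :
    Tendsto (fun n : ℕ =>
        (intensity d y (fun i => if u i ≠ 0 then ((n:ℤ)+1)^(u i).toNat + v i else v i) : ℝ)
          / (n:ℝ)^(∑ i, (u i).toNat * (y i).toNat))
      atTop
      (nhds (∏ i, if u i = 0 then (((v i).toNat.descFactorial (y i).toNat : ℕ) : ℝ) else 1)) := by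
  have hfac : ∀ i : Fin d, Tendsto (fun n : ℕ =>
      (((if u i ≠ 0 then ((n:ℤ)+1)^(u i).toNat + v i else v i).toNat.descFactorial
          (y i).toNat : ℝ))
        / (n:ℝ)^((u i).toNat * (y i).toNat)) atTop
      (nhds (if u i = 0 then (((v i).toNat.descFactorial (y i).toNat : ℕ) : ℝ) else 1)) := by
    intro i
    by_cases h : u i = 0
    · simp only [h, ne_eq, not_true_eq_false, if_false, if_true, Int.toNat_zero, zero_mul,
        pow_zero, div_one, not_not]
      simp
    · have hk : 1 ≤ (u i).toNat := by
        have := hu i; omega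
      have := lemA (u i).toNat (y i).toNat hk (v i) (hv i)
      simp only [ne_eq, h, not_false_eq_true, if_true, if_neg h]
      exact this
  have hall := tendsto_finset_prod (univ : Finset (Fin d)) (fun i _ => hfac i)
  apply hall.congr'
  have hNbd : ∀ n : ℕ, (Finset.univ.sup fun i => (y i).toNat) ≤ n →
      ∀ i, y i ≤ (if u i ≠ 0 then ((n:ℤ)+1)^(u i).toNat + v i else v i) := by
    intro n hn i
    by_cases h : u i = 0
    · simpa [h] using hyv i h
    · simp only [ne_eq, h, not_false_eq_true, if_true]
      have h1 : (y i).toNat ≤ n := le_trans (Finset.le_sup (f := fun i => (y i).toNat) (mem_univ i)) hn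
      have h2 : y i ≤ (n:ℤ) + 1 := by omega
      have h3 : ((n:ℤ)+1) ≤ ((n:ℤ)+1)^(u i).toNat :=
        le_self_pow₀ (by omega) (by have := hu i; omega)
      have := hv i
      omega
  filter_upwards [eventually_ge_atTop (Finset.univ.sup fun i => (y i).toNat)] with n hn
  rw [intensity, if_pos (hNbd n hn), Finset.prod_div_distrib, prod_pow_eq_pow_sum,
    Nat.cast_prod]

private lemma lemBpos {d : ℕ} (u y v : Fin d → ℤ) (hyv : ∀ i, u i = 0 → y i ≤ v i) :
    0 < ∏ i, if u i = 0 then (((v i).toNat.descFactorial (y i).toNat : ℕ) : ℝ) else 1 := by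
  refine Finset.prod_pos fun i _ => ?_
  by_cases h : u i = 0
  · simp only [if_pos h]
    exact_mod_cast descFactorial_pos' (Int.toNat_le_toNat (hyv i h))
  · simp [h]

private lemma pow_ratio_zero (a b : ℕ) (h : a < b) :
    Tendsto (fun n : ℕ => (n:ℝ)^a / (n:ℝ)^b) atTop (nhds 0) := by
  have h1 : Tendsto (fun n : ℕ => ((n:ℝ)^(b-a))⁻¹) atTop (nhds 0) :=
    ((tendsto_pow_atTop (by omega)).comp tendsto_natCast_atTop_atTop).inv_tendsto_atTop
  apply h1.congr'
  filter_upwards [eventually_ge_atTop 1] with n hn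
  have hn0 : (0:ℝ) < (n:ℝ) := by positivity
  rw [show b = a + (b-a) by omega, pow_add]
  field_simp
  congr 1; omega

private lemma pow_ratio_atTop (a b : ℕ) (h : b < a) :
    Tendsto (fun n : ℕ => (n:ℝ)^a / (n:ℝ)^b) atTop atTop := by
  have h1 : Tendsto (fun n : ℕ => (n:ℝ)^(a-b)) atTop atTop :=
    (tendsto_pow_atTop (by omega)).comp tendsto_natCast_atTop_atTop
  apply h1.congr'
  filter_upwards [eventually_ge_atTop 1] with n hn
  have hn0 : (0:ℝ) < (n:ℝ) := by positivity
  rw [show a = b + (a-b) by omega, pow_add]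
  field_simp
  congr 1; omega

private lemma pow_ratio_one (a : ℕ) :
    Tendsto (fun n : ℕ => (n:ℝ)^a / (n:ℝ)^a) atTop (nhds 1) := by
  apply tendsto_const_nhds.congr'
  filter_upwards [eventually_ge_atTop 1] with n hn
  have hn0 : (0:ℝ) < (n:ℝ) := by positivity
  rw [div_self (by positivity)]

private lemma div_split3 (B D q r : ℝ) (hq : q ≠ 0) (hr : r ≠ 0) :
    B / D = (B/q) * (q/r) * (r/D) := by
  rcases eq_or_ne D 0 with h|h
  · simp [h]
  · field_simp

private lemma div_split4 (A B D p q r : ℝ) (hp : p ≠ 0) (hq : q ≠ 0) (hr : r ≠ 0) :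
    (A * B) / D = (A/p) * (B/q) * ((p*q)/r) * (r/D) := by
  rcases eq_or_ne D 0 with h|h
  · simp [h]
  · field_simp

private lemma xshift_eq {d : ℕ} (ystar : ℕ → Fin d → ℤ) (u : Fin d → ℤ)
    (m : ℕ) (hm : 1 ≤ m) (n : ℕ) :
    xshift d ystar
      (fun n i => if u i ≠ 0 then ((n:ℤ)+1)^(u i).toNat + ystar 1 i else ystar 1 i) m n
      = fun i => if u i ≠ 0 then ((n:ℤ)+1)^(u i).toNat + ystar m i else ystar m i := by
  funext i
  show (if u i ≠ 0 then ((n:ℤ)+1)^(u i).toNat + ystar 1 i else ystar 1 i)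
      + ∑ j ∈ Finset.Ico 1 m, (ystar (j + 1) i - ystar j i) = _
  have htel : ∑ j ∈ Finset.Ico 1 m, (ystar (j + 1) i - ystar j i)
      = ystar m i - ystar 1 i := by
    rw [Finset.sum_Ico_eq_sum_range]
    have := Finset.sum_range_sub (fun t => ystar (t+1) i) (m-1)
    simp only [show m - 1 + 1 = m by omega] at this
    rw [← this]
    refine Finset.sum_congr rfl fun j _ => by
      congr 2 <;> omega
  rw [htel]
  by_cases h : u i = 0 <;> simp [h] <;> try ring

private lemma cast_exp {d : ℕ} (u y : Fin d → ℤ) (hu : ∀ i, 0 ≤ u i) (hy : ∀ i, 0 ≤ y i) :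
    ((∑ i, (u i).toNat * (y i).toNat : ℕ) : ℤ) = ∑ i, u i * y i := by
  push_cast
  refine Finset.sum_congr rfl fun i _ => by
    rw [Int.toNat_of_nonneg (hu i), Int.toNat_of_nonneg (hy i)]

private lemma combo_ratio (B D : ℕ → ℕ) (Ey Ey' : ℕ) (Cy Cy' : ℝ)
    (hCy : 0 < Cy) (hCy' : 0 < Cy')
    (hB : Tendsto (fun n : ℕ => (B n : ℝ)/(n:ℝ)^Ey) atTop (nhds Cy))
    (hD : Tendsto (fun n : ℕ => (D n : ℝ)/(n:ℝ)^Ey') atTop (nhds Cy')) :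
    Tendsto (fun n : ℕ => (B n : ℝ)/(D n : ℝ)) atTop atTop ∨
      ∃ c : ℝ, Tendsto (fun n : ℕ => (B n : ℝ)/(D n : ℝ)) atTop (nhds c) := by
  have hpowne : ∀ (n : ℕ), 1 ≤ n → ∀ (e : ℕ), ((n:ℝ))^e ≠ 0 := by
    intro n hn e
    have : (0:ℝ) < (n:ℝ) := by exact_mod_cast Nat.pos_of_ne_zero (by omega)
    positivity
  have hDinv : Tendsto (fun n : ℕ => (n:ℝ)^Ey' / (D n : ℝ)) atTop (nhds Cy'⁻¹) := by
    apply (hD.inv₀ hCy'.ne').congr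
    intro n
    rw [inv_div]
  have hsplit : ∀ᶠ n in atTop, (B n : ℝ) / (D n : ℝ)
      = ((B n : ℝ)/(n:ℝ)^Ey) * ((n:ℝ)^Ey/(n:ℝ)^Ey') * ((n:ℝ)^Ey'/(D n : ℝ)) := by
    filter_upwards [eventually_ge_atTop 1] with n hn
    exact div_split3 _ _ _ _ (hpowne n hn Ey) (hpowne n hn Ey')
  rcases lt_trichotomy Ey Ey' with hlt | heq2 | hgt
  · refine Or.inr ⟨Cy * 0 * Cy'⁻¹, ?_⟩
    refine Tendsto.congr' (EventuallyEq.symm hsplit) ?_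
    exact (hB.mul (pow_ratio_zero Ey Ey' hlt)).mul hDinv
  · subst heq2
    refine Or.inr ⟨Cy * 1 * Cy'⁻¹, ?_⟩
    refine Tendsto.congr' (EventuallyEq.symm hsplit) ?_
    exact (hB.mul (pow_ratio_one Ey)).mul hDinv
  · left
    refine Tendsto.congr' (EventuallyEq.symm hsplit) ?_
    exact Tendsto.atTop_mul_pos (inv_pos.mpr hCy')
      (Tendsto.pos_mul_atTop hCy hB (pow_ratio_atTop Ey Ey' hgt)) hDinv

private lemma combo_zero (A B D : ℕ → ℕ) (E0 Ey Em : ℕ) (C0 Cy Cm : ℝ)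
    (hCm : 0 < Cm) (hE : E0 + Ey < Em)
    (hA : Tendsto (fun n : ℕ => (A n : ℝ)/(n:ℝ)^E0) atTop (nhds C0))
    (hB : Tendsto (fun n : ℕ => (B n : ℝ)/(n:ℝ)^Ey) atTop (nhds Cy))
    (hD : Tendsto (fun n : ℕ => (D n : ℝ)/(n:ℝ)^Em) atTop (nhds Cm)) :
    Tendsto (fun n : ℕ => ((A n : ℝ) * (B n : ℝ))/(D n : ℝ)) atTop (nhds 0) := by
  have hpowne : ∀ (n : ℕ), 1 ≤ n → ∀ (e : ℕ), ((n:ℝ))^e ≠ 0 := by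
    intro n hn e
    have : (0:ℝ) < (n:ℝ) := by exact_mod_cast Nat.pos_of_ne_zero (by omega)
    positivity
  have hDinv : Tendsto (fun n : ℕ => (n:ℝ)^Em / (D n : ℝ)) atTop (nhds Cm⁻¹) := by
    apply (hD.inv₀ hCm.ne').congr
    intro n
    rw [inv_div]
  have hsplit : ∀ᶠ n in atTop, ((A n : ℝ) * (B n : ℝ)) / (D n : ℝ)
      = ((A n : ℝ)/(n:ℝ)^E0) * ((B n : ℝ)/(n:ℝ)^Ey) * ((n:ℝ)^(E0+Ey)/(n:ℝ)^Em)
        * ((n:ℝ)^Em/(D n : ℝ)) := by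
    filter_upwards [eventually_ge_atTop 1] with n hn
    rw [pow_add]
    exact div_split4 _ _ _ _ _ _ (hpowne n hn E0) (hpowne n hn Ey) (hpowne n hn Em)
  have h := ((hA.mul hB).mul (pow_ratio_zero (E0+Ey) Em hE)).mul hDinv
  rw [show C0 * Cy * 0 * Cm⁻¹ = 0 by ring] at h
  exact Tendsto.congr' (EventuallyEq.symm hsplit) h

end Aux

/-- Structural condition (Theorem): the existence of `u ∈ ℤ^d_{≥0}` and `m0` satisfying the
inner-product inequalities yields a tier sequence along which `R` is a strong tier-1 cycle. -/
theorem stmt5 {d M : ℕ} (hd : 1 ≤ d) (hM : 1 ≤ M)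
    (Rn : Finset ((Fin d → ℤ) × (Fin d → ℤ))) (hRn : IsRN d Rn)
    (ystar : ℕ → Fin d → ℤ) (hmem : IsCycleIn d Rn M ystar)
    (u : Fin d → ℤ) (hu : ∀ i, 0 ≤ u i)
    (m0 : ℕ) (hm01 : 1 ≤ m0) (hm0M : m0 ≤ M)
    (hI1 : ∃ i, u i ≠ 0) (hI2 : ∃ i, u i = 0)
    (hcond : ∀ m, 1 ≤ m → m ≤ M → ∀ y y' : Fin d → ℤ, (y, y') ∈ Rn →
      (y, y') ≠ (ystar m, ystar (cyc M m)) →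
      (∀ i, u i = 0 → y i ≤ ystar m i) →
      (∑ i, u i * y i) < ∑ i, u i * (ystar m i - ystar m0 i)) :
    IsTierSeq d Rn
      (fun n i => if u i ≠ 0 then ((n : ℤ) + 1) ^ (u i).toNat + ystar 1 i else ystar 1 i) ∧
    IsStrongT1Cycle d Rn M ystar
      (fun n i => if u i ≠ 0 then ((n : ℤ) + 1) ^ (u i).toNat + ystar 1 i else ystar 1 i) := by
    classical
  set x : ℕ → Fin d → ℤ :=
    fun n i => if u i ≠ 0 then ((n : ℤ) + 1) ^ (u i).toNat + ystar 1 i else ystar 1 i with hx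
  have hy1 : ∀ i, 0 ≤ ystar 1 i := (hRn _ (hmem 1 le_rfl hM)).1
  have hym : ∀ m, 1 ≤ m → m ≤ M → ∀ i, 0 ≤ ystar m i :=
    fun m h1 h2 => (hRn _ (hmem m h1 h2)).1
  have hxge1 : ∀ n i, ystar 1 i ≤ x n i := by
    intro n i
    by_cases h : u i = 0
    · simp [hx, h]
    · simp only [hx, ne_eq, h, not_false_eq_true, if_true]
      have : (0:ℤ) ≤ ((n:ℤ)+1)^(u i).toNat := by positivity
      omega
  have hpowne : ∀ (n : ℕ), 1 ≤ n → ∀ (e : ℕ), ((n:ℝ))^e ≠ 0 := by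
    intro n hn e
    have : (0:ℝ) < (n:ℝ) := by exact_mod_cast Nat.pos_of_ne_zero (by omega)
    positivity
  have hxtend : ∀ i, u i ≠ 0 → Tendsto (fun n => x n i) atTop atTop := by
    intro i h
    have h1 : Tendsto (fun n : ℕ => (n:ℤ) + 1) atTop atTop :=
      tendsto_atTop_add_const_right atTop 1 tendsto_natCast_atTop_atTop
    have h2 : Tendsto (fun n : ℕ => ((n:ℤ) + 1)^(u i).toNat) atTop atTop := by
      apply tendsto_atTop_mono (fun n => ?_) h1
      exact le_self_pow₀ (by omega) (by have := hu i; omega)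
    have h3 := tendsto_atTop_add_const_right atTop (ystar 1 i) h2
    apply h3.congr
    intro n
    simp [hx, h]
  constructor
  · refine ⟨fun n i => le_trans (hy1 i) (hxge1 n i), ?_, ?_, ?_⟩
    · obtain ⟨i, hi⟩ := hI1
      exact ⟨i, hxtend i hi⟩
    · intro i
      by_cases h : u i = 0
      · exact Or.inr ⟨ystar 1 i, fun n => by simp [hx, h]⟩
      · refine Or.inl ⟨hxtend i h, ?_⟩
        intro a b hab
        simp only [hx, ne_eq, h, not_false_eq_true, if_true]
        have hab' : ((a:ℤ)+1) ≤ ((b:ℤ)+1) := by exact_mod_cast by omega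
        gcongr
    · intro y y' hsy hsy'
      obtain ⟨y2, hy2⟩ := hsy
      obtain ⟨y2', hy2'⟩ := hsy'
      have hy0 : ∀ i, 0 ≤ y i := (hRn _ hy2).1
      have hy0' : ∀ i, 0 ≤ y' i := (hRn _ hy2').1
      by_cases hz' : ∃ i, u i = 0 ∧ ystar 1 i < y' i
      · obtain ⟨i0, h0, hlt⟩ := hz'
        refine Or.inr ⟨0, ?_⟩
        have : ∀ n : ℕ, intensity d y' (x n) = 0 := fun n => lemC u y' (ystar 1) i0 h0 hlt n
        simp only [this]
        simpa using tendsto_const_nhds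
      by_cases hz : ∃ i, u i = 0 ∧ ystar 1 i < y i
      · obtain ⟨i0, h0, hlt⟩ := hz
        refine Or.inr ⟨0, ?_⟩
        have : ∀ n : ℕ, intensity d y (x n) = 0 := fun n => lemC u y (ystar 1) i0 h0 hlt n
        simp only [this]
        simpa using tendsto_const_nhds
      push_neg at hz hz'
      have hyv : ∀ i, u i = 0 → y i ≤ ystar 1 i := fun i h => hz i h
      have hyv' : ∀ i, u i = 0 → y' i ≤ ystar 1 i := fun i h => hz' i h
      exact combo_ratio (fun n => intensity d y (x n)) (fun n => intensity d y' (x n))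
        _ _ _ _ (lemBpos u y (ystar 1) hyv) (lemBpos u y' (ystar 1) hyv')
        (lemB u hu y (ystar 1) hy0 hy1 hyv) (lemB u hu y' (ystar 1) hy0' hy1 hyv')
  · refine ⟨hmem, fun n => intensity_pos _ _ (hxge1 n), m0, hm01, hm0M, ?_⟩
    intro m hm1 hmM y y' hyy' hne
    have hy0 : ∀ i, 0 ≤ y i := (hRn _ hyy').1
    have hxs : ∀ (k : ℕ), 1 ≤ k → ∀ n, xshift d ystar x k n
        = fun i => if u i ≠ 0 then ((n:ℤ)+1)^(u i).toNat + ystar k i else ystar k i := by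
      intro k hk n
      rw [hx]
      exact xshift_eq ystar u k hk n
    by_cases hzc : ∃ i, u i = 0 ∧ ystar m i < y i
    · obtain ⟨i0, h0, hlt⟩ := hzc
      have hz0 : ∀ n, intensity d y (xshift d ystar x m n) = 0 := by
        intro n
        rw [hxs m hm1 n]
        exact lemC u y (ystar m) i0 h0 hlt n
      simp only [hz0]
      simpa using tendsto_const_nhds
    push_neg at hzc
    have hyv : ∀ i, u i = 0 → y i ≤ ystar m i := hzc
    have hlt := hcond m hm1 hmM y y' hyy' hne hyv
    have hym' := hym m hm1 hmM
    have hym0 := hym m0 hm01 hm0M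
    have hCm := lemBpos u (ystar m) (ystar m) (fun i _ => le_rfl)
    have hE : (∑ i, (u i).toNat * (ystar m0 i).toNat) + (∑ i, (u i).toNat * (y i).toNat)
        < ∑ i, (u i).toNat * (ystar m i).toNat := by
      have c1 := cast_exp u (ystar m0) hu hym0
      have c2 := cast_exp u y hu hy0
      have c3 := cast_exp u (ystar m) hu hym'
      have h4 : ∑ i, u i * (ystar m i - ystar m0 i)
          = (∑ i, u i * ystar m i) - ∑ i, u i * ystar m0 i := by
        rw [← Finset.sum_sub_distrib]
        exact Finset.sum_congr rfl fun i _ => by ring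
      rw [h4] at hlt
      omega
    have hA' : Tendsto (fun n : ℕ =>
        (intensity d (ystar m0) (xshift d ystar x m0 n) : ℝ)
          / (n:ℝ)^(∑ i, (u i).toNat * (ystar m0 i).toNat)) atTop
        (nhds (∏ i, if u i = 0
          then (((ystar m0 i).toNat.descFactorial (ystar m0 i).toNat : ℕ) : ℝ) else 1)) := by
      apply (lemB u hu (ystar m0) (ystar m0) hym0 hym0 (fun i _ => le_rfl)).congr
      intro n
      rw [hxs m0 hm01 n]
    have hB' : Tendsto (fun n : ℕ =>
        (intensity d y (xshift d ystar x m n) : ℝ)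
          / (n:ℝ)^(∑ i, (u i).toNat * (y i).toNat)) atTop
        (nhds (∏ i, if u i = 0
          then (((ystar m i).toNat.descFactorial (y i).toNat : ℕ) : ℝ) else 1)) := by
      apply (lemB u hu y (ystar m) hy0 hym' hyv).congr
      intro n
      rw [hxs m hm1 n]
    have hD' : Tendsto (fun n : ℕ =>
        (intensity d (ystar m) (xshift d ystar x m n) : ℝ)
          / (n:ℝ)^(∑ i, (u i).toNat * (ystar m i).toNat)) atTop
        (nhds (∏ i, if u i = 0
          then (((ystar m i).toNat.descFactorial (ystar m i).toNat : ℕ) : ℝ) else 1)) := by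
      apply (lemB u hu (ystar m) (ystar m) hym' hym' (fun i _ => le_rfl)).congr
      intro n
      rw [hxs m hm1 n]
    exact combo_zero _ _ _ _ _ _ _ _ _ hCm hE hA' hB' hD'
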